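/- Let P^n (n ≥ 3) be a simple n-polytope. The face code B_k(P) ⊆ F_2^{V(P)} is self-dual if and only if: |V(P)| is even, dim B_k(P) = |V(P)|/2, and every face of P of codimension j with k ≤ j ≤ 2k has an even number of vertices. -/

import Mathlib

/-- The dual code of `C` with respect to the standard bilinear form `⟨x,y⟩ = ∑ xᵢyᵢ`. -/
def dualCode {V : Type*} [Fintype V] (C : Submodule (ZMod 2) (V → ZMod 2)) :
    Submodule (ZMod 2) (V → ZMod 2) where
  carrier := { x | ∀ c ∈ C, ∑ v, x v * c v = 0 }
  add_mem' := by
    intro a b ha hb c hc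
    simp only [Set.mem_setOf_eq, Pi.add_apply, add_mul, Finset.sum_add_distrib] at *
    rw [ha c hc, hb c hc, add_zero]
  zero_mem' := by intro c hc; simp
  smul_mem' := by
    intro r x hx c hc
    simp only [Set.mem_setOf_eq, Pi.smul_apply, smul_eq_mul, mul_assoc, ← Finset.mul_sum] at *
    rw [hx c hc, mul_zero]

/-- An abstract (combinatorial) simple `n`-polytope, recorded by its vertex–facet
incidences: each facet is given by its vertex set. Every vertex lies on exactly `n`
facets, whose intersection is that vertex alone; codimension-`(n-1)` faces (edges)
have exactly two vertices; and the 1-skeleton (graph of vertices and edges) is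
connected. -/
structure SimplePolytope (n : ℕ) (V : Type*) [Fintype V] [DecidableEq V] where
  facets : Finset (Finset V)
  facet_nonempty : ∀ F ∈ facets, F.Nonempty
  vertex_facets_card : ∀ v : V, (facets.filter (fun F => v ∈ F)).card = n
  vertex_inf : ∀ v : V, (facets.filter (fun F => v ∈ F)).inf id = {v}
  edge_card : ∀ S ⊆ facets, S.card = n - 1 → (S.inf id).Nonempty → (S.inf id).card = 2
  connected : (SimpleGraph.fromRel (fun v w : V =>
      ∃ S ⊆ facets, S.card = n - 1 ∧ S.inf id = {v, w})).Connected

namespace SimplePolytope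

variable {n : ℕ} {V : Type*} [Fintype V] [DecidableEq V]

/-- `f` is a (nonempty) face of codimension `k`: the intersection of `k` distinct
facets (for `k = 0` the whole vertex set). -/
def IsFace (P : SimplePolytope n V) (k : ℕ) (f : Finset V) : Prop :=
  f.Nonempty ∧ ∃ S ⊆ P.facets, S.card = k ∧ f = S.inf id

/-- The indicator vector `ξ_f ∈ 𝔽₂^V` of a vertex set `f`. -/
def ind (f : Finset V) : V → ZMod 2 := fun v => if v ∈ f then 1 else 0

/-- The codimension-`k` face code `𝔅_k(P)`: the span of the indicator vectors of the
codimension-`k` faces. -/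
def faceCode (P : SimplePolytope n V) (k : ℕ) : Submodule (ZMod 2) (V → ZMod 2) :=
  Submodule.span (ZMod 2) { x | ∃ f, P.IsFace k f ∧ x = ind f }

/-- A proper coloring of the facets: intersecting facets receive distinct colors. -/
def IsProperColoring (P : SimplePolytope n V) (c : Finset V → Fin n) : Prop :=
  ∀ F ∈ P.facets, ∀ G ∈ P.facets, F ≠ G → (F ∩ G).Nonempty → c F ≠ c G

/-- `P` is `n`-colorable. -/
def Colorable (P : SimplePolytope n V) : Prop := ∃ c, P.IsProperColoring c

end SimplePolytope

section Aux

open SimplePolytope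

variable {n : ℕ} {V : Type*} [Fintype V] [DecidableEq V]

/-- The standard dot-product bilinear form on `𝔽₂^V`. -/
def bform (V : Type*) [Fintype V] : LinearMap.BilinForm (ZMod 2) (V → ZMod 2) :=
  LinearMap.mk₂ (ZMod 2) (fun x y => ∑ v, x v * y v)
    (fun x x' y => by simp [add_mul, Finset.sum_add_distrib])
    (fun c x y => by simp [Finset.mul_sum, mul_assoc])
    (fun x y y' => by simp [mul_add, Finset.sum_add_distrib])
    (fun c x y => by simp [Finset.mul_sum, mul_left_comm])

@[simp] lemma bform_apply (x y : V → ZMod 2) : bform V x y = ∑ v, x v * y v := rfl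

lemma bform_refl : (bform V).IsRefl := by
  intro x y h
  simpa [mul_comm, Finset.sum_congr rfl fun v _ => mul_comm (y v) (x v)] using h

lemma bform_nondeg : (bform V).Nondegenerate := by
  constructor <;> intro x hx <;> funext v
  all_goals have := hx (Pi.single v 1)
  all_goals simpa [bform_apply, Pi.single_apply, mul_ite, ite_mul] using this

lemma mem_dualCode {C : Submodule (ZMod 2) (V → ZMod 2)} {x : V → ZMod 2} :
    x ∈ dualCode C ↔ ∀ c ∈ C, ∑ v, x v * c v = 0 := Iff.rfl

lemma dualCode_eq (C : Submodule (ZMod 2) (V → ZMod 2)) :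
    dualCode C = (bform V).orthogonal C := by
  ext x
  rw [mem_dualCode, LinearMap.BilinForm.mem_orthogonal_iff]
  constructor
  · intro h c hc
    rw [bform_apply, ← h c hc]
    exact Finset.sum_congr rfl fun v _ => mul_comm _ _
  · intro h c hc
    have := h c hc
    rw [bform_apply] at this
    rw [← this]
    exact Finset.sum_congr rfl fun v _ => mul_comm _ _

lemma finrank_dualCode (C : Submodule (ZMod 2) (V → ZMod 2)) :
    Module.finrank (ZMod 2) (dualCode C) =
      Fintype.card V - Module.finrank (ZMod 2) C := by
  rw [dualCode_eq, LinearMap.BilinForm.finrank_orthogonal bform_nondeg,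
    Module.finrank_fintype_fun_eq_card]

lemma sum_ind_mul_ind (f g : Finset V) :
    ∑ v, ind f v * ind g v = ((f ∩ g).card : ZMod 2) := by
  have h : ∀ v : V, ind f v * ind g v = if v ∈ f ∩ g then (1 : ZMod 2) else 0 := by
    intro v
    simp only [ind, Finset.mem_inter]
    by_cases hf : v ∈ f <;> by_cases hg : v ∈ g <;> simp [hf, hg]
  rw [Finset.sum_congr rfl fun v _ => h v, Finset.sum_ite_mem, Finset.univ_inter,
    Finset.sum_const, nsmul_eq_mul, mul_one]

lemma even_iff_cast_zero (m : ℕ) : Even m ↔ ((m : ZMod 2) = 0) := by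
  rw [ZMod.natCast_eq_zero_iff, even_iff_two_dvd]

lemma ind_mem_faceCode (P : SimplePolytope n V) {k : ℕ} {f : Finset V}
    (hf : P.IsFace k f) : ind f ∈ P.faceCode k :=
  Submodule.subset_span ⟨f, hf, rfl⟩

/-- The intersection of two codim-`k` faces is empty or a face of codimension between
`k` and `2k`; in either case it has even cardinality under the evenness hypothesis. -/
lemma even_inter_of_faces (P : SimplePolytope n V) {k : ℕ}
    (hev : ∀ j, k ≤ j → j ≤ 2 * k → ∀ f, P.IsFace j f → Even f.card)
    {f g : Finset V} (hf : P.IsFace k f) (hg : P.IsFace k g) :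
    Even (f ∩ g).card := by
  obtain ⟨-, Sf, hSf, hSfc, rfl⟩ := hf
  obtain ⟨-, Sg, hSg, hSgc, rfl⟩ := hg
  have hinter : Sf.inf id ∩ Sg.inf id = (Sf ∪ Sg).inf id := by
    rw [Finset.inf_union, Finset.inf_eq_inter]
  rcases Finset.eq_empty_or_nonempty (Sf.inf id ∩ Sg.inf id) with he | hne
  · rw [he]; simp
  · rw [hinter] at hne ⊢
    refine hev (Sf ∪ Sg).card ?_ ?_ _ ⟨hne, Sf ∪ Sg, Finset.union_subset hSf hSg, rfl, rfl⟩
    · rw [← hSfc]; exact Finset.card_le_card Finset.subset_union_left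
    · calc (Sf ∪ Sg).card ≤ Sf.card + Sg.card := Finset.card_union_le _ _
        _ = 2 * k := by rw [hSfc, hSgc]; ring

lemma faceCode_le_dualCode (P : SimplePolytope n V) {k : ℕ}
    (hev : ∀ j, k ≤ j → j ≤ 2 * k → ∀ f, P.IsFace j f → Even f.card) :
    P.faceCode k ≤ dualCode (P.faceCode k) := by
  refine Submodule.span_le.2 ?_
  rintro x ⟨f, hf, rfl⟩
  rw [SetLike.mem_coe, mem_dualCode]
  intro c hc
  have hc' : c ∈ Submodule.span (ZMod 2) { x | ∃ f, P.IsFace k f ∧ x = ind f } := hc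
  clear hc
  induction hc' using Submodule.span_induction with
  | mem c hcmem =>
    obtain ⟨g, hg, rfl⟩ := hcmem
    rw [sum_ind_mul_ind, ← even_iff_cast_zero]
    exact even_inter_of_faces P hev hf hg
  | zero => simp
  | add a b _ _ ha hb =>
    simp only [Pi.add_apply, mul_add, Finset.sum_add_distrib, ha, hb, add_zero]
  | smul r a _ ha =>
    simp only [Pi.smul_apply, smul_eq_mul, mul_left_comm, ← Finset.mul_sum, ha, mul_zero]

end Aux

section Aux2

open SimplePolytope

variable {n : ℕ} {V : Type*} [Fintype V] [DecidableEq V]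

lemma forward_even (P : SimplePolytope n V) {k : ℕ}
    (hC : P.faceCode k = dualCode (P.faceCode k)) :
    ∀ j, k ≤ j → j ≤ 2 * k → ∀ f, P.IsFace j f → Even f.card := by
  intro j hkj hj2k f hf
  obtain ⟨hfne, S, hSsub, hScard, rfl⟩ := hf
  obtain ⟨S₁, hS₁sub, hS₁card⟩ := Finset.exists_subset_card_eq (s := S) (n := k) (by omega)
  obtain ⟨S₂, hsd, hS₂sub, hS₂card⟩ :=
    Finset.exists_subsuperset_card_eq (n := k) (Finset.sdiff_subset (s := S) (t := S₁))
      (by rw [Finset.card_sdiff_of_subset hS₁sub]; omega) (by omega)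
  have hunion : S₁ ∪ S₂ = S := by
    apply Finset.Subset.antisymm (Finset.union_subset hS₁sub hS₂sub)
    intro x hx
    by_cases h1 : x ∈ S₁
    · exact Finset.mem_union_left _ h1
    · exact Finset.mem_union_right _ (hsd (Finset.mem_sdiff.2 ⟨hx, h1⟩))
  have hne1 : (S₁.inf id).Nonempty := by
    obtain ⟨v, hv⟩ := hfne
    exact ⟨v, Finset.le_iff_subset.1 (Finset.inf_mono hS₁sub) hv⟩
  have hne2 : (S₂.inf id).Nonempty := by
    obtain ⟨v, hv⟩ := hfne
    exact ⟨v, Finset.le_iff_subset.1 (Finset.inf_mono hS₂sub) hv⟩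
  have hface1 : P.IsFace k (S₁.inf id) := ⟨hne1, S₁, hS₁sub.trans hSsub, hS₁card, rfl⟩
  have hface2 : P.IsFace k (S₂.inf id) := ⟨hne2, S₂, hS₂sub.trans hSsub, hS₂card, rfl⟩
  have hmem1 := ind_mem_faceCode P hface1
  have hmem2 := ind_mem_faceCode P hface2
  rw [hC, mem_dualCode] at hmem1
  have h0 := hmem1 _ hmem2
  rw [sum_ind_mul_ind] at h0
  have hint : S₁.inf id ∩ S₂.inf id = S.inf id := by
    rw [← Finset.inf_eq_inter, ← Finset.inf_union, hunion]
  rw [hint] at h0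
  exact (even_iff_cast_zero _).2 h0

end Aux2

/-- For a simple `n`-polytope `P` with `n ≥ 3`, the face code `𝔅_k(P)` is self-dual if
and only if `|V(P)|` is even, `dim 𝔅_k(P) = |V(P)|/2`, and every face of codimension
`j` with `k ≤ j ≤ 2k` has an even number of vertices. -/
theorem faceCode_selfDual_iff {n : ℕ} {V : Type*} [Fintype V] [DecidableEq V]
    (P : SimplePolytope n V) (hn : 3 ≤ n) (k : ℕ) :
    P.faceCode k = dualCode (P.faceCode k) ↔
      (Even (Fintype.card V) ∧
       Module.finrank (ZMod 2) (P.faceCode k) = Fintype.card V / 2 ∧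
       ∀ j, k ≤ j → j ≤ 2 * k → ∀ f, P.IsFace j f → Even f.card) := by
  constructor
  · intro hC
    have hd := finrank_dualCode (P.faceCode k)
    rw [← hC] at hd
    have hle := Submodule.finrank_le (P.faceCode k)
    rw [Module.finrank_fintype_fun_eq_card] at hle
    refine ⟨⟨Module.finrank (ZMod 2) (P.faceCode k), by omega⟩, by omega, forward_even P hC⟩
  · rintro ⟨⟨m, hm⟩, hdim, hev⟩
    have hle := faceCode_le_dualCode P hev
    have hd := finrank_dualCode (P.faceCode k)
    exact Submodule.eq_of_le_of_finrank_le hle (by rw [hd, hdim]; omega)
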